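/- Let i ≤ w and n ≥ 3w. Suppose f is a nonzero function on w-subsets of {1,...,n} that is invariant under the value of the distribution of its elements in N_2 = {2w+1,...,n} (depends only on x ∩ {1,...,2w} and |x ∩ N_2|), and f is an eigenfunction of J(n,w) with eigenvalue (w-i)(n-w-i)-i. Define h on subsets z of {1,...,2w} with |z| ≤ w by h(z) = f(z ∪ {2w+1,...,3w-|z|}). Then for every subset z of {1,...,2w} with |z| = j ≤ w: ((w-i)(n-w-i)-i)·h(z) = Σ_{|z'|=j, |z ∩ z'|=j-1} h(z') + (n-3w+j)·Σ_{|z'|=j-1, z' ⊂ z} h(z') + (w-j)·Σ_{|z'|=j+1, z ⊂ z'} h(z') + (w-j)(n-3w+j)·h(z), where all z' range over subsets of {1,...,2w} and h is extended by 0 to sets of size > w. -/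

import Mathlib

open Finset

/-- The local equation satisfied by `h(z) = f(z ∪ {2w+1,…,3w-|z|})` when `f` is a
`λ_i(n,w)`-eigenfunction of `J(n,w)` (with `i ≤ w`, `n ≥ 3w`) that depends only on
`x ∩ {1,…,2w}` (coordinates of `Fin n` with value `< 2w`). Here `h` is extended by `0`
to subsets of `{1,…,2w}` of size `> w`, and the block `{2w+1,…,3w-|z|}` is the set of
coordinates with values in `[2w, 3w - |z|)`. -/
lemma card_val_Ico (n k m : ℕ) (hm : m ≤ n) :
    ((univ : Finset (Fin n)).filter (fun a : Fin n => k ≤ (a:ℕ) ∧ (a:ℕ) < m)).card = m - k := by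
  rw [← Nat.card_Ico]
  apply Finset.card_bij (fun (a : Fin n) _ => (a : ℕ))
  · intro a ha; simp only [mem_filter, mem_univ, true_and] at ha
    simp [Finset.mem_Ico, ha.1, ha.2]
  · intro a _ b _ h; exact Fin.val_injective h
  · intro b hb; simp only [Finset.mem_Ico] at hb
    exact ⟨⟨b, lt_of_lt_of_le hb.2 hm⟩, by simp [hb.1, hb.2], rfl⟩

theorem restricted_eigen_equation (n i w : ℕ) (hiw : i ≤ w) (hn : 3 * w ≤ n)
    (f : Finset (Fin n) → ℝ)
    (hne : ∃ x : Finset (Fin n), x.card = w ∧ f x ≠ 0)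
    (hinv : ∀ x₁ x₂ : Finset (Fin n), x₁.card = w → x₂.card = w →
      x₁.filter (fun a : Fin n => (a : ℕ) < 2 * w) = x₂.filter (fun a : Fin n => (a : ℕ) < 2 * w) →
      f x₁ = f x₂)
    (hf : ∀ x : Finset (Fin n), x.card = w →
      ∑ y ∈ univ.filter (fun y : Finset (Fin n) => y.card = w ∧ (x ∩ y).card + 1 = w), f y
        = (((w : ℝ) - i) * ((n : ℝ) - w - i) - i) * f x) :
    ∀ z : Finset (Fin n), (∀ a ∈ z, (a : ℕ) < 2 * w) → z.card ≤ w →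
      (let h : Finset (Fin n) → ℝ := fun u =>
        if u.card ≤ w then
          f (u ∪ univ.filter (fun a : Fin n => 2 * w ≤ (a : ℕ) ∧ (a : ℕ) < 3 * w - u.card))
        else 0
      (((w : ℝ) - i) * ((n : ℝ) - w - i) - i) * h z
        = (∑ z' ∈ univ.filter (fun z' : Finset (Fin n) =>
              (∀ a ∈ z', (a : ℕ) < 2 * w) ∧ z'.card = z.card ∧ (z ∩ z').card + 1 = z.card),
            h z')
        + ((n : ℝ) - 3 * w + z.card) *
            (∑ z' ∈ univ.filter (fun z' : Finset (Fin n) =>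
              (∀ a ∈ z', (a : ℕ) < 2 * w) ∧ z'.card + 1 = z.card ∧ z' ⊆ z), h z')
        + ((w : ℝ) - z.card) *
            (∑ z' ∈ univ.filter (fun z' : Finset (Fin n) =>
              (∀ a ∈ z', (a : ℕ) < 2 * w) ∧ z'.card = z.card + 1 ∧ z ⊆ z'), h z')
        + ((w : ℝ) - z.card) * ((n : ℝ) - 3 * w + z.card) * h z) := by
  intro z hz hzw h
  have hh : ∀ u : Finset (Fin n), h u = if u.card ≤ w then
      f (u ∪ univ.filter (fun a : Fin n => 2 * w ≤ (a : ℕ) ∧ (a : ℕ) < 3 * w - u.card)) else 0 :=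
    fun u => rfl
  set j := z.card with hj
  -- generic disjointness
  have hdisj : ∀ s t : Finset (Fin n), (∀ a ∈ s, (a:ℕ) < 2*w) → (∀ a ∈ t, 2*w ≤ (a:ℕ)) →
      Disjoint s t := by
    intro s t hs ht
    rw [Finset.disjoint_left]
    intro a ha hat
    have := hs a ha; have := ht a hat; omega
  -- splitting a union along the 2w cut
  have hfU : ∀ s t : Finset (Fin n), (∀ a ∈ s, (a:ℕ) < 2*w) → (∀ a ∈ t, 2*w ≤ (a:ℕ)) →
      ((s ∪ t).filter (fun a : Fin n => (a:ℕ) < 2*w) = s ∧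
       (s ∪ t).filter (fun a : Fin n => ¬ (a:ℕ) < 2*w) = t) := by
    intro s t hs ht
    constructor
    · rw [filter_union, filter_true_of_mem hs,
        filter_false_of_mem (fun a ha => by have := ht a ha; omega), union_empty]
    · rw [filter_union, filter_false_of_mem (fun a ha hc => hc (hs a ha)),
        filter_true_of_mem (fun a ha => by have := ht a ha; omega), empty_union]
  -- the key invariance lemma
  have hkey : ∀ (z' y : Finset (Fin n)), (∀ a ∈ z', (a:ℕ) < 2*w) → z'.card ≤ w → y.card = w →
      y.filter (fun a : Fin n => (a:ℕ) < 2*w) = z' → f y = h z' := by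
    intro z' y ha hcw hyc hyf
    rw [hh, if_pos hcw]
    have hge : ∀ a ∈ univ.filter (fun a : Fin n => 2*w ≤ (a:ℕ) ∧ (a:ℕ) < 3*w - z'.card),
        2*w ≤ (a:ℕ) := fun a ha => (mem_filter.1 ha).2.1
    have hcard : (univ.filter (fun a : Fin n => 2*w ≤ (a:ℕ) ∧ (a:ℕ) < 3*w - z'.card)).card
        = w - z'.card := by
      rw [card_val_Ico n (2*w) (3*w - z'.card) (by omega)]; omega
    have hfu := hfU z' _ ha hge
    apply hinv y _ hyc
    · rw [card_union_of_disjoint (hdisj z' _ ha hge), hcard]; omega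
    · rw [hyf, hfu.1]
  -- the block B and the base set x
  set B : Finset (Fin n) := univ.filter (fun a : Fin n => 2 * w ≤ (a : ℕ) ∧ (a : ℕ) < 3 * w - j)
    with hB
  have hBmem : ∀ a : Fin n, a ∈ B ↔ 2*w ≤ (a:ℕ) ∧ (a:ℕ) < 3*w - j := by
    intro a; rw [hB]; simp
  have hBge : ∀ a ∈ B, 2*w ≤ (a:ℕ) := fun a ha => ((hBmem a).1 ha).1
  have hBlt : ∀ a ∈ B, (a:ℕ) < 3*w - j := fun a ha => ((hBmem a).1 ha).2
  have hBcard : B.card = w - j := by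
    rw [hB, card_val_Ico n (2*w) (3*w - j) (by omega)]; omega
  have hzB : Disjoint z B := hdisj z B hz hBge
  set x : Finset (Fin n) := z ∪ B with hx
  have hxcard : x.card = w := by
    rw [hx, card_union_of_disjoint hzB, hBcard]; omega
  have hxz : h z = f x := by
    rw [hh, if_pos hzw, show z.card = j from hj.symm ▸ rfl, ← hB, hx]
  -- intersection decomposition
  have hinter : ∀ y : Finset (Fin n),
      x ∩ y = (z ∩ y.filter (fun a : Fin n => (a:ℕ) < 2*w))
        ∪ (B ∩ y.filter (fun a : Fin n => ¬ (a:ℕ) < 2*w)) := by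
    intro y; ext a
    simp only [hx, mem_inter, mem_union, mem_filter]
    constructor
    · rintro ⟨hzb | hbb, hy⟩
      · exact Or.inl ⟨hzb, hy, hz a hzb⟩
      · refine Or.inr ⟨hbb, hy, ?_⟩
        have := hBge a hbb; omega
    · rintro (⟨h1, h2, _⟩ | ⟨h1, h2, _⟩)
      exacts [⟨Or.inl h1, h2⟩, ⟨Or.inr h1, h2⟩]
  have hintercard : ∀ y : Finset (Fin n),
      (x ∩ y).card = (z ∩ y.filter (fun a : Fin n => (a:ℕ) < 2*w)).card
        + (B ∩ y.filter (fun a : Fin n => ¬ (a:ℕ) < 2*w)).card := by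
    intro y
    rw [hinter y, card_union_of_disjoint (hzB.mono inter_subset_left inter_subset_left)]
  have hsplitcard : ∀ y : Finset (Fin n),
      (y.filter (fun a : Fin n => (a:ℕ) < 2*w)).card
        + (y.filter (fun a : Fin n => ¬ (a:ℕ) < 2*w)).card = y.card :=
    fun y => card_filter_add_card_filter_not _
  have hsplitun : ∀ y : Finset (Fin n),
      y.filter (fun a : Fin n => (a:ℕ) < 2*w) ∪ y.filter (fun a : Fin n => ¬ (a:ℕ) < 2*w) = y :=
    fun y => filter_union_filter_not_eq (p := fun a : Fin n => (a:ℕ) < 2*w) (s := y)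
  -- names for the index sets
  set T1 : Finset (Finset (Fin n)) := univ.filter (fun z' : Finset (Fin n) =>
      (∀ a ∈ z', (a : ℕ) < 2 * w) ∧ z'.card = j ∧ (z ∩ z').card + 1 = j) with hT1
  set T2 : Finset (Finset (Fin n)) := univ.filter (fun z' : Finset (Fin n) =>
      (∀ a ∈ z', (a : ℕ) < 2 * w) ∧ z'.card + 1 = j ∧ z' ⊆ z) with hT2
  set T3 : Finset (Finset (Fin n)) := univ.filter (fun z' : Finset (Fin n) =>
      (∀ a ∈ z', (a : ℕ) < 2 * w) ∧ z'.card = j + 1 ∧ z ⊆ z') with hT3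
  set N : Finset (Finset (Fin n)) := univ.filter (fun y : Finset (Fin n) =>
      y.card = w ∧ (x ∩ y).card + 1 = w) with hN
  set g : Finset (Fin n) → Finset (Fin n) :=
    fun y => y.filter (fun a : Fin n => (a : ℕ) < 2 * w) with hg
  set V : Finset (Fin n) := univ.filter (fun a : Fin n => 3*w - j ≤ (a:ℕ) ∧ (a:ℕ) < n) with hV
  have hVmem : ∀ a : Fin n, a ∈ V ↔ 3*w - j ≤ (a:ℕ) := by
    intro a; rw [hV]; simp [a.isLt]
  have hVcard : V.card = n - (3*w - j) := by
    rw [hV, card_val_Ico n (3*w - j) n le_rfl]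
  -- classification of neighbors
  have hmaps : ∀ y ∈ N, g y ∈ T1 ∪ T2 ∪ T3 ∪ ({z} : Finset (Finset (Fin n))) := by
    intro y hy
    simp only [hN, mem_filter, mem_univ, true_and] at hy
    obtain ⟨hyw, hyx⟩ := hy
    simp only [mem_union, mem_singleton, hT1, hT2, hT3, mem_filter, mem_univ, true_and, hg]
    set fp := y.filter (fun a : Fin n => (a:ℕ) < 2*w) with hfp
    set fnp := y.filter (fun a : Fin n => ¬ (a:ℕ) < 2*w) with hfnp
    have hall : ∀ a : Fin n, a ∈ y ∧ (a:ℕ) < 2*w → (a:ℕ) < 2*w := fun a ha => ha.2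
    have h1 : fp.card + fnp.card = w := by rw [hfp, hfnp, hsplitcard y, hyw]
    have h2 : (z ∩ fp).card + (B ∩ fnp).card + 1 = w := by
      rw [← hintercard y]; exact hyx
    have h3 : (z ∩ fp).card ≤ j := by
      have := card_le_card (show z ∩ fp ⊆ z from inter_subset_left); omega
    have h4 : (z ∩ fp).card ≤ fp.card := card_le_card inter_subset_right
    have h5 : (B ∩ fnp).card ≤ w - j := by
      have := card_le_card (show B ∩ fnp ⊆ B from inter_subset_left); omega
    have h6 : (B ∩ fnp).card ≤ fnp.card := card_le_card inter_subset_right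
    rcases (show ((z ∩ fp).card + 1 = j ∧ (fp.card + 1 = j ∨ fp.card = j)) ∨
        ((z ∩ fp).card = j ∧ (fp.card = j ∨ fp.card = j + 1)) from by omega) with
      ⟨hc, hk | hk⟩ | ⟨hc, hk | hk⟩
    · have he : z ∩ fp = fp := eq_of_subset_of_card_le inter_subset_right (by omega)
      exact Or.inl (Or.inl (Or.inr ⟨hall, hk, by rw [← he]; exact inter_subset_left⟩))
    · exact Or.inl (Or.inl (Or.inl ⟨hall, hk, hc⟩))
    · have hzf : z ∩ fp = z := eq_of_subset_of_card_le inter_subset_left (by omega)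
      have hsub : z ⊆ fp := by rw [← hzf]; exact inter_subset_right
      exact Or.inr (eq_of_subset_of_card_le hsub (by omega)).symm
    · have hzf : z ∩ fp = z := eq_of_subset_of_card_le inter_subset_left (by omega)
      exact Or.inl (Or.inr ⟨hall, hk, by rw [← hzf]; exact inter_subset_right⟩)
  -- disjointness of the index sets
  have hd1 : Disjoint T1 T2 := by
    rw [Finset.disjoint_left]
    intro a ha1 ha2
    simp only [hT1, hT2, mem_filter, mem_univ, true_and] at ha1 ha2
    omega
  have hd2 : Disjoint (T1 ∪ T2) T3 := by
    rw [Finset.disjoint_left]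
    intro a ha1 ha2
    simp only [mem_union, hT1, hT2, hT3, mem_filter, mem_univ, true_and] at ha1 ha2
    rcases ha1 with h | h <;> omega
  have hd3 : Disjoint (T1 ∪ T2 ∪ T3) ({z} : Finset (Finset (Fin n))) := by
    rw [Finset.disjoint_right]
    intro a ha
    rw [mem_singleton] at ha
    subst ha
    intro hmem
    rcases mem_union.1 hmem with hm | hm
    · rcases mem_union.1 hm with hm1 | hm1
      · rw [hT1, mem_filter, inter_self] at hm1
        have e1 := hm1.2.2.1
        have e2 := hm1.2.2.2
        omega
      · rw [hT2, mem_filter] at hm1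
        have e1 := hm1.2.2.1
        omega
    · rw [hT3, mem_filter] at hm
      have e1 := hm.2.2.1
      omega
  -- fiber over z' ∈ T1
  have fib1 : ∀ z' ∈ T1, N.filter (fun y => g y = z') = {z' ∪ B} := by
    intro z' hz'1
    simp only [hT1, mem_filter, mem_univ, true_and] at hz'1
    obtain ⟨ha, hb, hc⟩ := hz'1
    have hd : Disjoint z' B := hdisj z' B ha hBge
    have hfu := hfU z' B ha hBge
    ext y
    simp only [mem_filter, mem_singleton, hN, mem_univ, true_and, hg]
    constructor
    · rintro ⟨⟨hyw, hyx⟩, hgy⟩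
      have h1 : z'.card + (y.filter (fun a : Fin n => ¬ (a:ℕ) < 2*w)).card = w := by
        rw [← hgy, hsplitcard y, hyw]
      have h2 := hintercard y
      rw [hgy] at h2
      have e1 : B ∩ y.filter (fun a : Fin n => ¬ (a:ℕ) < 2*w) = B :=
        eq_of_subset_of_card_le inter_subset_left (by omega)
      have e2 : B ∩ y.filter (fun a : Fin n => ¬ (a:ℕ) < 2*w)
          = y.filter (fun a : Fin n => ¬ (a:ℕ) < 2*w) :=
        eq_of_subset_of_card_le inter_subset_right (by omega)
      rw [← hsplitun y, hgy, ← e2, e1]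
    · rintro rfl
      refine ⟨⟨?_, ?_⟩, hfu.1⟩
      · rw [card_union_of_disjoint hd, hb, hBcard]; omega
      · rw [hintercard (z' ∪ B), hfu.1, hfu.2, inter_self, hBcard]; omega
  have e1 : (∑ z' ∈ T1, ∑ y ∈ N.filter (fun y => g y = z'), f y) = ∑ z' ∈ T1, h z' := by
    refine sum_congr rfl fun z' hz'1 => ?_
    rw [fib1 z' hz'1, sum_singleton]
    simp only [hT1, mem_filter, mem_univ, true_and] at hz'1
    obtain ⟨ha, hb, hc⟩ := hz'1
    exact hkey z' (z' ∪ B) ha (by omega)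
      (by rw [card_union_of_disjoint (hdisj z' B ha hBge), hb, hBcard]; omega)
      (hfU z' B ha hBge).1
  -- fiber over z' ∈ T2
  have fib2 : ∀ z' ∈ T2, N.filter (fun y => g y = z') = V.image (fun v => insert v (z' ∪ B)) := by
    intro z' hz'2
    simp only [hT2, mem_filter, mem_univ, true_and] at hz'2
    obtain ⟨ha, hb, hcsub⟩ := hz'2
    have hzz' : z ∩ z' = z' := inter_eq_right.mpr hcsub
    ext y
    simp only [mem_filter, mem_image, hN, mem_univ, true_and, hg]
    constructor
    · rintro ⟨⟨hyw, hyx⟩, hgy⟩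
      have h1 : z'.card + (y.filter (fun a : Fin n => ¬ (a:ℕ) < 2*w)).card = w := by
        rw [← hgy, hsplitcard y, hyw]
      have h2 := hintercard y
      rw [hgy, hzz'] at h2
      have hBsub : B ⊆ y.filter (fun a : Fin n => ¬ (a:ℕ) < 2*w) := by
        have he : B ∩ y.filter (fun a : Fin n => ¬ (a:ℕ) < 2*w) = B :=
          eq_of_subset_of_card_le inter_subset_left (by omega)
        rw [← he]; exact inter_subset_right
      have hcard1 : ((y.filter (fun a : Fin n => ¬ (a:ℕ) < 2*w)) \ B).card = 1 := by
        rw [card_sdiff_of_subset hBsub]; omega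
      obtain ⟨v, hv⟩ := card_eq_one.1 hcard1
      have hvmem : v ∈ (y.filter (fun a : Fin n => ¬ (a:ℕ) < 2*w)) \ B := by
        rw [hv]; exact mem_singleton_self v
      obtain ⟨hv1, hv2⟩ := mem_sdiff.1 hvmem
      have hvlt : ¬ (v:ℕ) < 2*w := (mem_filter.1 hv1).2
      have hvge : 3*w - j ≤ (v:ℕ) := by
        by_contra hcon
        exact hv2 ((hBmem v).2 ⟨by omega, by omega⟩)
      have hfnp : y.filter (fun a : Fin n => ¬ (a:ℕ) < 2*w) = insert v B := by
        refine (eq_of_subset_of_card_le (insert_subset hv1 hBsub) ?_).symm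
        rw [card_insert_of_notMem hv2, hBcard]; omega
      refine ⟨v, (hVmem v).2 hvge, ?_⟩
      conv_rhs => rw [← hsplitun y, hgy, hfnp]
      rw [union_insert]
    · rintro ⟨v, hvV, rfl⟩
      have hvge : 3*w - j ≤ (v:ℕ) := (hVmem v).1 hvV
      have hvB : v ∉ B := fun hmem => by have := hBlt v hmem; omega
      have hins : ∀ a ∈ insert v B, 2*w ≤ (a:ℕ) := by
        intro a haa
        rcases mem_insert.1 haa with rfl | haa
        · omega
        · exact hBge a haa
      have hfu := hfU z' (insert v B) ha hins
      have hyu : insert v (z' ∪ B) = z' ∪ insert v B := (union_insert v z' B).symm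
      refine ⟨⟨?_, ?_⟩, ?_⟩
      · rw [hyu, card_union_of_disjoint (hdisj z' _ ha hins), card_insert_of_notMem hvB,
          hBcard]
        omega
      · rw [hyu, hintercard (z' ∪ insert v B), hfu.1, hfu.2, hzz',
          inter_eq_left.mpr (subset_insert v B), hBcard]
        omega
      · rw [hyu]; exact hfu.1
  have e2 : (∑ z' ∈ T2, ∑ y ∈ N.filter (fun y => g y = z'), f y)
      = ((n : ℝ) - 3*w + j) * ∑ z' ∈ T2, h z' := by
    rw [mul_sum]
    refine sum_congr rfl fun z' hz'2 => ?_
    rw [fib2 z' hz'2]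
    simp only [hT2, mem_filter, mem_univ, true_and] at hz'2
    obtain ⟨ha, hb, hcsub⟩ := hz'2
    have hinj2 : ∀ v1 ∈ V, ∀ v2 ∈ V,
        insert v1 (z' ∪ B) = insert v2 (z' ∪ B) → v1 = v2 := by
      intro v1 h1 v2 h2 heq
      have hv1 : v1 ∉ z' ∪ B := by
        intro hmem
        have hge := (hVmem v1).1 h1
        rcases mem_union.1 hmem with hm | hm
        · have := ha v1 hm; omega
        · have := hBlt v1 hm; omega
      have : v1 ∈ insert v2 (z' ∪ B) := heq ▸ mem_insert_self v1 _
      rcases mem_insert.1 this with he | hm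
      · exact he
      · exact absurd hm hv1
    rw [sum_image hinj2]
    have hconst : ∀ v ∈ V, f (insert v (z' ∪ B)) = h z' := by
      intro v hv
      have hvge : 3*w - j ≤ (v:ℕ) := (hVmem v).1 hv
      have hvB : v ∉ B := fun hmem => by have := hBlt v hmem; omega
      have hins : ∀ a ∈ insert v B, 2*w ≤ (a:ℕ) := by
        intro a haa
        rcases mem_insert.1 haa with rfl | haa
        · omega
        · exact hBge a haa
      have hyu : insert v (z' ∪ B) = z' ∪ insert v B := (union_insert v z' B).symm
      rw [hyu]
      refine hkey z' _ ha (by omega) ?_ (hfU z' _ ha hins).1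
      rw [card_union_of_disjoint (hdisj z' _ ha hins), card_insert_of_notMem hvB, hBcard]
      omega
    rw [sum_congr rfl hconst, sum_const, hVcard, nsmul_eq_mul,
      Nat.cast_sub (by omega : 3*w - j ≤ n), Nat.cast_sub (by omega : j ≤ 3*w)]
    push_cast
    ring
  -- fiber over z' ∈ T3
  have fib3 : ∀ z' ∈ T3, N.filter (fun y => g y = z') = B.image (fun u => z' ∪ B.erase u) := by
    intro z' hz'3
    simp only [hT3, mem_filter, mem_univ, true_and] at hz'3
    obtain ⟨ha, hb, hsub⟩ := hz'3
    have hzz' : z ∩ z' = z := inter_eq_left.mpr hsub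
    ext y
    simp only [mem_filter, mem_image, hN, mem_univ, true_and, hg]
    constructor
    · rintro ⟨⟨hyw, hyx⟩, hgy⟩
      have h1 : z'.card + (y.filter (fun a : Fin n => ¬ (a:ℕ) < 2*w)).card = w := by
        rw [← hgy, hsplitcard y, hyw]
      have h2 := hintercard y
      rw [hgy, hzz'] at h2
      have hsubB : y.filter (fun a : Fin n => ¬ (a:ℕ) < 2*w) ⊆ B := by
        have he : B ∩ y.filter (fun a : Fin n => ¬ (a:ℕ) < 2*w)
            = y.filter (fun a : Fin n => ¬ (a:ℕ) < 2*w) :=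
          eq_of_subset_of_card_le inter_subset_right (by omega)
        rw [← he]; exact inter_subset_left
      have hcard1 : (B \ y.filter (fun a : Fin n => ¬ (a:ℕ) < 2*w)).card = 1 := by
        rw [card_sdiff_of_subset hsubB]; omega
      obtain ⟨u, hu⟩ := card_eq_one.1 hcard1
      have humem : u ∈ B \ y.filter (fun a : Fin n => ¬ (a:ℕ) < 2*w) := by
        rw [hu]; exact mem_singleton_self u
      obtain ⟨hu1, hu2⟩ := mem_sdiff.1 humem
      have hfnp : y.filter (fun a : Fin n => ¬ (a:ℕ) < 2*w) = B.erase u := by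
        refine eq_of_subset_of_card_le ?_ ?_
        · intro a haa
          refine mem_erase.2 ⟨?_, hsubB haa⟩
          rintro rfl
          exact hu2 haa
        · rw [card_erase_of_mem hu1]; omega
      refine ⟨u, hu1, ?_⟩
      conv_rhs => rw [← hsplitun y, hgy, hfnp]
    · rintro ⟨u, huB, rfl⟩
      have hB1 : 1 ≤ B.card := card_pos.2 ⟨u, huB⟩
      have her : ∀ a ∈ B.erase u, 2*w ≤ (a:ℕ) := fun a haa => hBge a (erase_subset u B haa)
      have hfu := hfU z' (B.erase u) ha her
      refine ⟨⟨?_, ?_⟩, hfu.1⟩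
      · rw [card_union_of_disjoint (hdisj z' _ ha her), hb, card_erase_of_mem huB, hBcard]
        omega
      · rw [hintercard (z' ∪ B.erase u), hfu.1, hfu.2, hzz',
          inter_eq_right.mpr (erase_subset u B), card_erase_of_mem huB, hBcard]
        omega
  have e3 : (∑ z' ∈ T3, ∑ y ∈ N.filter (fun y => g y = z'), f y)
      = ((w : ℝ) - j) * ∑ z' ∈ T3, h z' := by
    rw [mul_sum]
    refine sum_congr rfl fun z' hz'3 => ?_
    rw [fib3 z' hz'3]
    simp only [hT3, mem_filter, mem_univ, true_and] at hz'3
    obtain ⟨ha, hb, hsub⟩ := hz'3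
    by_cases hcase : j < w
    · have hinj3 : ∀ u1 ∈ B, ∀ u2 ∈ B, z' ∪ B.erase u1 = z' ∪ B.erase u2 → u1 = u2 := by
        intro u1 h1 u2 h2 heq
        by_contra hne
        have hm : u1 ∈ z' ∪ B.erase u2 := mem_union_right _ (mem_erase.2 ⟨hne, h1⟩)
        rw [← heq] at hm
        rcases mem_union.1 hm with hm | hm
        · have := ha u1 hm; have := hBge u1 h1; omega
        · exact notMem_erase u1 B hm
      rw [sum_image hinj3]
      have hconst : ∀ u ∈ B, f (z' ∪ B.erase u) = h z' := by
        intro u huB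
        have her : ∀ a ∈ B.erase u, 2*w ≤ (a:ℕ) := fun a haa => hBge a (erase_subset u B haa)
        refine hkey z' _ ha (by omega) ?_ (hfU z' _ ha her).1
        rw [card_union_of_disjoint (hdisj z' _ ha her), hb, card_erase_of_mem huB, hBcard]
        omega
      rw [sum_congr rfl hconst, sum_const, hBcard, nsmul_eq_mul,
        Nat.cast_sub (by omega : j ≤ w)]
    · have hBemp : B = ∅ := card_eq_zero.1 (by rw [hBcard]; omega)
      rw [hBemp, image_empty, sum_empty, show ((w:ℝ) - j) = 0 by
        rw [show j = w by omega]; ring]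
      ring
  -- fiber over z itself
  have fib4 : N.filter (fun y => g y = z)
      = (B ×ˢ V).image (fun uv : Fin n × Fin n => insert uv.2 (z ∪ B.erase uv.1)) := by
    ext y
    simp only [mem_filter, mem_image, hN, mem_univ, true_and, hg]
    constructor
    · rintro ⟨⟨hyw, hyx⟩, hgy⟩
      have h1 : z.card + (y.filter (fun a : Fin n => ¬ (a:ℕ) < 2*w)).card = w := by
        rw [← hgy, hsplitcard y, hyw]
      have h2 := hintercard y
      rw [hgy, inter_self] at h2
      have hbd1 := card_inter_add_card_sdiff B (y.filter (fun a : Fin n => ¬ (a:ℕ) < 2*w))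
      have hbd2 := card_inter_add_card_sdiff (y.filter (fun a : Fin n => ¬ (a:ℕ) < 2*w)) B
      have hcomm : ((y.filter (fun a : Fin n => ¬ (a:ℕ) < 2*w)) ∩ B).card
          = (B ∩ y.filter (fun a : Fin n => ¬ (a:ℕ) < 2*w)).card := by rw [inter_comm]
      have hu1c : (B \ y.filter (fun a : Fin n => ¬ (a:ℕ) < 2*w)).card = 1 := by omega
      have hv1c : ((y.filter (fun a : Fin n => ¬ (a:ℕ) < 2*w)) \ B).card = 1 := by omega
      obtain ⟨u, hu⟩ := card_eq_one.1 hu1c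
      obtain ⟨v, hv⟩ := card_eq_one.1 hv1c
      have humem : u ∈ B \ y.filter (fun a : Fin n => ¬ (a:ℕ) < 2*w) := by
        rw [hu]; exact mem_singleton_self u
      have hvmem : v ∈ (y.filter (fun a : Fin n => ¬ (a:ℕ) < 2*w)) \ B := by
        rw [hv]; exact mem_singleton_self v
      obtain ⟨hu1, hu2⟩ := mem_sdiff.1 humem
      obtain ⟨hv1, hv2⟩ := mem_sdiff.1 hvmem
      have hvlt : ¬ (v:ℕ) < 2*w := (mem_filter.1 hv1).2
      have hvge : 3*w - j ≤ (v:ℕ) := by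
        by_contra hcon
        exact hv2 ((hBmem v).2 ⟨by omega, by omega⟩)
      have hBe : B ∩ y.filter (fun a : Fin n => ¬ (a:ℕ) < 2*w) = B.erase u := by
        refine eq_of_subset_of_card_le ?_ ?_
        · intro a haa
          obtain ⟨ha1, ha2⟩ := mem_inter.1 haa
          refine mem_erase.2 ⟨?_, ha1⟩
          rintro rfl
          exact hu2 ha2
        · rw [card_erase_of_mem hu1]; omega
      have hvBe : v ∉ B.erase u := fun hm => hv2 (erase_subset u B hm)
      have hfnp : y.filter (fun a : Fin n => ¬ (a:ℕ) < 2*w) = insert v (B.erase u) := by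
        refine (eq_of_subset_of_card_le (insert_subset hv1 ?_) ?_).symm
        · rw [← hBe]; exact inter_subset_right
        · rw [card_insert_of_notMem hvBe, card_erase_of_mem hu1]; omega
      refine ⟨(u, v), mem_product.2 ⟨hu1, (hVmem v).2 hvge⟩, ?_⟩
      conv_rhs => rw [← hsplitun y, hgy, hfnp]
      rw [union_insert]
    · rintro ⟨⟨u, v⟩, huv, rfl⟩
      obtain ⟨huB, hvV⟩ := mem_product.1 huv
      have hB1 : 1 ≤ B.card := card_pos.2 ⟨u, huB⟩
      have hvge : 3*w - j ≤ (v:ℕ) := (hVmem v).1 hvV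
      have hvB : v ∉ B := fun hmem => by have := hBlt v hmem; omega
      have hvBe : v ∉ B.erase u := fun hm => hvB (erase_subset u B hm)
      have hins : ∀ a ∈ insert v (B.erase u), 2*w ≤ (a:ℕ) := by
        intro a haa
        rcases mem_insert.1 haa with rfl | haa
        · omega
        · exact hBge a (erase_subset u B haa)
      have hfu := hfU z (insert v (B.erase u)) hz hins
      have hyu : insert v (z ∪ B.erase u) = z ∪ insert v (B.erase u) :=
        (union_insert v z (B.erase u)).symm
      refine ⟨⟨?_, ?_⟩, ?_⟩
      · rw [hyu, card_union_of_disjoint (hdisj z _ hz hins), card_insert_of_notMem hvBe,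
          card_erase_of_mem huB, hBcard]
        omega
      · rw [hyu, hintercard (z ∪ insert v (B.erase u)), hfu.1, hfu.2, inter_self,
          inter_insert_of_notMem hvB, inter_eq_right.mpr (erase_subset u B),
          card_erase_of_mem huB, hBcard]
        omega
      · rw [hyu]; exact hfu.1
  have e4 : (∑ y ∈ N.filter (fun y => g y = z), f y)
      = ((w : ℝ) - j) * ((n : ℝ) - 3*w + j) * f x := by
    rw [fib4]
    have hinj4 : ∀ p1 ∈ B ×ˢ V, ∀ p2 ∈ B ×ˢ V,
        insert p1.2 (z ∪ B.erase p1.1) = insert p2.2 (z ∪ B.erase p2.1) → p1 = p2 := by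
      rintro ⟨u1, v1⟩ hp1 ⟨u2, v2⟩ hp2 heq
      obtain ⟨hu1, hv1⟩ := mem_product.1 hp1
      obtain ⟨hu2, hv2⟩ := mem_product.1 hp2
      have hvge1 : 3*w - j ≤ (v1:ℕ) := (hVmem v1).1 hv1
      have hnotin : ∀ (u v : Fin n), 3*w - j ≤ (v:ℕ) → v ∉ z ∪ B.erase u := by
        intro u v hge hmem
        rcases mem_union.1 hmem with hm | hm
        · have := hz v hm; omega
        · have := hBlt v (erase_subset u B hm); omega
      have hveq : v1 = v2 := by
        have : v1 ∈ insert v2 (z ∪ B.erase u2) := heq ▸ mem_insert_self v1 _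
        rcases mem_insert.1 this with he | hm
        · exact he
        · exact absurd hm (hnotin u2 v1 hvge1)
      subst hveq
      have hseq : z ∪ B.erase u1 = z ∪ B.erase u2 := by
        have e1' := erase_insert (hnotin u1 v1 hvge1)
        have e2' := erase_insert (hnotin u2 v1 hvge1)
        rw [← e1', ← e2', heq]
      have hueq : u1 = u2 := by
        by_contra hne
        have hm : u1 ∈ z ∪ B.erase u2 := mem_union_right _ (mem_erase.2 ⟨hne, hu1⟩)
        rw [← hseq] at hm
        rcases mem_union.1 hm with hm | hm
        · have := hz u1 hm; have := hBge u1 hu1; omega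
        · exact notMem_erase u1 B hm
      rw [hueq]
    rw [sum_image hinj4]
    have hconst : ∀ p ∈ B ×ˢ V, f (insert p.2 (z ∪ B.erase p.1)) = f x := by
      rintro ⟨u, v⟩ huv
      obtain ⟨huB, hvV⟩ := mem_product.1 huv
      have hB1 : 1 ≤ B.card := card_pos.2 ⟨u, huB⟩
      have hvge : 3*w - j ≤ (v:ℕ) := (hVmem v).1 hvV
      have hvB : v ∉ B := fun hmem => by have := hBlt v hmem; omega
      have hvBe : v ∉ B.erase u := fun hm => hvB (erase_subset u B hm)
      have hins : ∀ a ∈ insert v (B.erase u), 2*w ≤ (a:ℕ) := by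
        intro a haa
        rcases mem_insert.1 haa with rfl | haa
        · omega
        · exact hBge a (erase_subset u B haa)
      have hyu : insert v (z ∪ B.erase u) = z ∪ insert v (B.erase u) :=
        (union_insert v z (B.erase u)).symm
      rw [hyu, ← hxz]
      refine hkey z _ hz hzw ?_ (hfU z _ hz hins).1
      rw [card_union_of_disjoint (hdisj z _ hz hins), card_insert_of_notMem hvBe,
        card_erase_of_mem huB, hBcard]
      omega
    rw [sum_congr rfl hconst, sum_const, card_product, hBcard, hVcard, nsmul_eq_mul,
      Nat.cast_mul, Nat.cast_sub (by omega : j ≤ w),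
      Nat.cast_sub (by omega : 3*w - j ≤ n), Nat.cast_sub (by omega : j ≤ 3*w)]
    push_cast
    ring
  -- assemble
  rw [hxz, ← hf x hxcard, ← hN, ← Finset.sum_fiberwise_of_maps_to hmaps f,
    sum_union hd3, sum_union hd2, sum_union hd1, sum_singleton, e1, e2, e3, e4]
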